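/- For chunk size C ≥ 2 and sequence length T ≥ 1, after ⌈log_C T⌉ layers of the C-ary chunked combination scheme, the final output position aggregates all T inputs: formally, for an associative operation ⋆ with identity, defining o_i^{(0)} = s_i and o_i^{(ℓ)} = o_{i−(C−1)·C^{ℓ−1}}^{(ℓ−1)} ⋆ ⋯ ⋆ o_{i−C^{ℓ−1}}^{(ℓ−1)} ⋆ o_i^{(ℓ−1)} (with identity for out-of-range indices), o_{T−1}^{(⌈log_C T⌉)} = s_0 ⋆ ⋯ ⋆ s_{T−1}. -/

import Mathlib

/-- The `C`-ary chunked combination scheme on integer positions: layer `0`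
reads the inputs, and layer `ℓ+1` at position `i` multiplies the layer-`ℓ`
outputs at positions `i − k·C^ℓ` for `k = C−1, …, 1, 0` in that order. -/
def chunkCombine {S : Type*} [Monoid S] (C : ℕ) (s : ℤ → S) : ℕ → ℤ → S
  | 0, i => s i
  | ℓ + 1, i =>
    ((List.range C).map (fun t => chunkCombine C s ℓ (i - ((C - 1 - t : ℕ) : ℤ) * C ^ ℓ))).prod

private lemma prod_range_mul_aux {S : Type*} [Monoid S] (f : ℕ → S) (n : ℕ) :
    ∀ m : ℕ, ((List.range m).map
        (fun t => ((List.range n).map (fun j => f (t * n + j))).prod)).prod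
      = ((List.range (m * n)).map f).prod := by
  intro m
  induction m with
  | zero => simp
  | succ m ih =>
    rw [List.range_succ, Nat.succ_mul, List.range_add]
    simp [ih, List.map_map, Function.comp_def]

private lemma chunkCombine_window {S : Type*} [Monoid S] (C : ℕ) (s : ℤ → S) :
    ∀ ℓ (i : ℤ), chunkCombine C s ℓ i
      = ((List.range (C ^ ℓ)).map (fun j : ℕ => s (i - (C ^ ℓ : ℕ) + 1 + (j : ℤ)))).prod := by
  intro ℓ
  induction ℓ with
  | zero =>
    intro i
    rw [show List.range (C ^ 0) = [0] from rfl]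
    simp [chunkCombine]
  | succ ℓ ih =>
    intro i
    show ((List.range C).map
        (fun t => chunkCombine C s ℓ (i - ((C - 1 - t : ℕ) : ℤ) * C ^ ℓ))).prod = _
    have key : ((List.range C).map
        (fun t => chunkCombine C s ℓ (i - ((C - 1 - t : ℕ) : ℤ) * C ^ ℓ)))
        = (List.range C).map (fun t => ((List.range (C ^ ℓ)).map
            (fun j : ℕ => (fun k : ℕ => s (i - (C ^ (ℓ+1) : ℕ) + 1 + (k : ℤ)))
              (t * C ^ ℓ + j))).prod) := by
      apply List.map_congr_left
      intro t ht
      rw [ih]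
      apply congrArg
      apply List.map_congr_left
      intro j hj
      have htC : t < C := List.mem_range.mp ht
      have hcast : ((C - 1 - t : ℕ) : ℤ) = (C : ℤ) - 1 - t := by omega
      apply congrArg
      push_cast [hcast]
      ring
    rw [key,
      prod_range_mul_aux (fun k : ℕ => s (i - (C ^ (ℓ+1) : ℕ) + 1 + (k : ℤ))) (C ^ ℓ) C,
      ← pow_succ']

/-- For chunk size `C ≥ 2` and sequence length `T ≥ 1`, after `⌈log_C T⌉`
layers the output at position `T − 1` aggregates all `T` inputs:
`o_{T−1}^{(⌈log_C T⌉)} = s_0 ⋆ ⋯ ⋆ s_{T−1}` (out-of-range inputs being the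
identity). -/
theorem chunkCombine_aggregates {S : Type*} [Monoid S] (C T : ℕ)
    (hC : 2 ≤ C) (hT : 1 ≤ T) (s : ℤ → S) (hs : ∀ i : ℤ, i < 0 → s i = 1) :
    chunkCombine C s (Nat.clog C T) ((T : ℤ) - 1)
      = ((List.range T).map (fun j => s (j : ℤ))).prod := by
  set L := Nat.clog C T with hL
  set N := C ^ L with hN
  have hTN : T ≤ N := Nat.le_pow_clog (by omega) T
  rw [chunkCombine_window, ← hN]
  have hsplit : N = (N - T) + T := by omega
  rw [hsplit, List.range_add, List.map_append, List.prod_append]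
  have h1 : ((List.range (N - T)).map
      (fun j : ℕ => s ((T : ℤ) - 1 - ((N - T) + T : ℕ) + 1 + (j : ℤ)))).prod = 1 := by
    apply List.prod_eq_one
    intro x hx
    obtain ⟨j, hj, rfl⟩ := List.mem_map.mp hx
    have hj' : j < N - T := List.mem_range.mp hj
    apply hs
    have h2 : (((N - T) + T : ℕ) : ℤ) = (N : ℤ) := by omega
    rw [h2]
    have : (j : ℤ) < (N : ℤ) - T := by omega
    linarith
  have hco : (do let a ← List.range T; pure ((a : ℤ)))
      = (List.range T).map (fun a : ℕ => (a : ℤ)) :=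
    List.map_eq_flatMap.symm
  rw [h1, one_mul, List.map_map, hco, List.map_map]
  apply congrArg
  apply List.map_congr_left
  intro k hk
  have h2 : (((N - T) + T : ℕ) : ℤ) = (N : ℤ) := by omega
  have h3 : ((N - T : ℕ) : ℤ) = (N : ℤ) - T := by omega
  simp only [Function.comp]
  push_cast [h2, h3]
  ring_nf
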